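/- Expansion in higher-order Frobenius–Euler polynomials: D_n(x|a_1,…,a_r) = ∑_{m=0}^n ( ∑_{i=0}^{n-m} ∑_{l=0}^{n-m-i} C(s,i) C(n-i,l) (n)_i (1−λ)^{-i} S_1(n-i-l,m) D_l(a_1,…,a_r) ) H_m^{(s)}(x|λ), for λ ≠ 1 and integer s ≥ 0. -/

import Mathlib

open Finset PowerSeries

/-- Exponential generating function: `∑ f n * t^n / n!`. -/
noncomputable def egf (f : ℕ → ℚ) : PowerSeries ℚ :=
  PowerSeries.mk fun n => f n / n.factorial

/-- The formal power series `log(1+t) = ∑_{m≥1} (-1)^{m-1} t^m / m`. -/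
noncomputable def log1p : PowerSeries ℚ :=
  PowerSeries.mk fun n => if n = 0 then 0 else (-1) ^ (n - 1) / n

/-- Formal exponential composition: for `f` with zero constant term this is
`exp(f) = ∑_k f^k / k!` (the sum in each coefficient is finite). -/
noncomputable def expPS (f : PowerSeries ℚ) : PowerSeries ℚ :=
  PowerSeries.mk fun n =>
    ∑ k ∈ Finset.range (n + 1), (PowerSeries.coeff n (f ^ k)) / k.factorial

/-- `(1+t)^a := exp(a · log(1+t))` as a formal power series. -/
noncomputable def onePow (a : ℚ) : PowerSeries ℚ := expPS (PowerSeries.C a * log1p)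

/-- `e^{a t} = ∑ a^n t^n / n!`. -/
noncomputable def expAt (a : ℚ) : PowerSeries ℚ :=
  PowerSeries.mk fun n => a ^ n / n.factorial

/-- Falling factorial `(x)_n = x(x-1)⋯(x-n+1)`. -/
noncomputable def ffall (x : ℚ) (n : ℕ) : ℚ := ∏ i ∈ Finset.range n, (x - i)

-- ## basic coefficient lemmas

lemma coeff_expPS (f : PowerSeries ℚ) (n : ℕ) :
    PowerSeries.coeff n (expPS f) =
      ∑ k ∈ Finset.range (n + 1), (PowerSeries.coeff n (f ^ k)) / k.factorial := by
  simp [expPS]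

lemma coeff_pow_eq_zero {f : PowerSeries ℚ} (hf : PowerSeries.constantCoeff f = 0)
    {n k : ℕ} (h : n < k) : PowerSeries.coeff n (f ^ k) = 0 := by
  obtain ⟨g, hg⟩ := PowerSeries.X_dvd_iff.2 hf
  rw [hg, mul_pow, PowerSeries.coeff_X_pow_mul']
  simp [not_le.2 h]

lemma constantCoeff_log1p : PowerSeries.constantCoeff log1p = 0 := by
  simp [log1p, ← PowerSeries.coeff_zero_eq_constantCoeff_apply]

lemma coeff_log1p_pow_eq_zero {n k : ℕ} (h : n < k) :
    PowerSeries.coeff n (log1p ^ k) = 0 :=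
  coeff_pow_eq_zero constantCoeff_log1p h

lemma deriv_expPS (f : PowerSeries ℚ) (hf : PowerSeries.constantCoeff f = 0) :
    d⁄dX ℚ (expPS f) = d⁄dX ℚ f * expPS f := by
  ext n
  rw [PowerSeries.coeff_derivative, coeff_expPS, Finset.sum_mul]
  have hL : ∀ k : ℕ, (PowerSeries.coeff (n+1) (f ^ k)) / k.factorial * (n+1)
      = (k : ℚ) * PowerSeries.coeff n (f ^ (k-1) * d⁄dX ℚ f) / k.factorial := by
    intro k
    have h1 : PowerSeries.coeff (n+1) (f ^ k) * (n+1)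
        = PowerSeries.coeff n (d⁄dX ℚ (f ^ k)) := by
      rw [PowerSeries.coeff_derivative]
    have h2 : d⁄dX ℚ (f ^ k) = k • (f ^ (k-1) * d⁄dX ℚ f) := by
      rw [Derivation.leibniz_pow, smul_eq_mul, ← smul_mul_assoc]
    rw [div_mul_eq_mul_div, h1, h2, map_nsmul, nsmul_eq_mul, mul_div_assoc]
  rw [Finset.sum_congr rfl (fun k _ => hL k)]
  rw [Finset.sum_range_succ']
  simp only [Nat.cast_zero, zero_mul, zero_div, add_zero, Nat.add_sub_cancel]
  have hstep : ∀ j : ℕ, ((j:ℚ)+1) * PowerSeries.coeff n (f ^ j * d⁄dX ℚ f) / (j+1).factorial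
      = PowerSeries.coeff n (f ^ j * d⁄dX ℚ f) / j.factorial := by
    intro j
    rw [Nat.factorial_succ, Nat.cast_mul]
    push_cast
    rw [div_mul_eq_div_div, mul_div_cancel_left₀ _ (by positivity : ((j:ℚ)+1) ≠ 0)]
  simp only [Nat.cast_add, Nat.cast_one, hstep]
  -- RHS side
  rw [PowerSeries.coeff_mul]
  have hR : ∀ p ∈ Finset.HasAntidiagonal.antidiagonal n,
      PowerSeries.coeff p.1 (d⁄dX ℚ f) * PowerSeries.coeff p.2 (expPS f)
      = ∑ k ∈ Finset.range (n+1),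
          PowerSeries.coeff p.1 (d⁄dX ℚ f) * (PowerSeries.coeff p.2 (f ^ k) / k.factorial) := by
    intro p hp
    have hb : p.2 ≤ n := Finset.HasAntidiagonal.antidiagonal.snd_le hp
    rw [coeff_expPS, Finset.mul_sum]
    apply Finset.sum_subset
    · exact Finset.range_subset_range.2 (by omega)
    · intro k _ hk
      have : p.2 < k := by simp at hk; omega
      rw [coeff_pow_eq_zero hf this, zero_div, mul_zero]
  rw [Finset.sum_congr rfl hR, Finset.sum_comm]
  apply Finset.sum_congr rfl
  intro k _
  rw [mul_comm (f ^ k), PowerSeries.coeff_mul, Finset.sum_div]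
  exact Finset.sum_congr rfl fun p _ => by ring

lemma coeff_dlog1p (n : ℕ) : PowerSeries.coeff n (d⁄dX ℚ log1p) = (-1) ^ n := by
  rw [PowerSeries.coeff_derivative]
  simp only [log1p, PowerSeries.coeff_mk, Nat.add_eq_zero, Nat.succ_ne_zero, and_false,
    if_false, Nat.add_sub_cancel]
  push_cast
  rw [div_mul_cancel₀ _ (by positivity : ((n:ℚ)+1) ≠ 0)]

lemma one_add_X_mul_dlog1p : (1 + PowerSeries.X) * d⁄dX ℚ log1p = 1 := by
  ext n
  rw [add_mul, one_mul, map_add]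
  cases n with
  | zero =>
    have h2 := coeff_dlog1p 0
    rw [PowerSeries.coeff_zero_eq_constantCoeff_apply] at h2
    simp only [PowerSeries.coeff_zero_eq_constantCoeff_apply, map_mul, map_one,
      PowerSeries.constantCoeff_X, zero_mul, add_zero, h2, pow_zero]
  | succ n =>
    rw [PowerSeries.coeff_succ_X_mul, coeff_dlog1p, coeff_dlog1p, PowerSeries.coeff_one]
    simp [pow_succ]

lemma constantCoeff_expPS (f : PowerSeries ℚ) :
    PowerSeries.constantCoeff (expPS f) = 1 := by
  rw [← PowerSeries.coeff_zero_eq_constantCoeff_apply, coeff_expPS]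
  simp

lemma onePow_deriv (x : ℚ) :
    (1 + PowerSeries.X) * d⁄dX ℚ (onePow x) = PowerSeries.C x * onePow x := by
  have h0 : PowerSeries.constantCoeff (PowerSeries.C x * log1p) = 0 := by
    rw [map_mul, constantCoeff_log1p, mul_zero]
  have h := deriv_expPS _ h0
  rw [Derivation.leibniz, derivative_C, smul_zero, add_zero, smul_eq_mul] at h
  calc (1 + PowerSeries.X) * d⁄dX ℚ (onePow x)
      = PowerSeries.C x * ((1 + PowerSeries.X) * d⁄dX ℚ log1p) * expPS (PowerSeries.C x * log1p) := by
        rw [onePow, h]; ring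
    _ = PowerSeries.C x * onePow x := by rw [one_add_X_mul_dlog1p, mul_one, onePow]

lemma coeff_onePow (x : ℚ) (n : ℕ) :
    PowerSeries.coeff n (onePow x) = ffall x n / n.factorial := by
  induction n with
  | zero =>
    rw [PowerSeries.coeff_zero_eq_constantCoeff_apply, onePow, constantCoeff_expPS]
    simp [ffall]
  | succ n ih =>
    have h := onePow_deriv x
    have hc := congrArg (PowerSeries.coeff n) h
    rw [add_mul, one_mul, map_add, PowerSeries.coeff_derivative, PowerSeries.coeff_C_mul] at hc
    have hX : PowerSeries.coeff n (PowerSeries.X * d⁄dX ℚ (onePow x))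
        = (n : ℚ) * PowerSeries.coeff n (onePow x) := by
      cases n with
      | zero =>
        rw [PowerSeries.coeff_zero_eq_constantCoeff_apply, map_mul, PowerSeries.constantCoeff_X,
          zero_mul, Nat.cast_zero, zero_mul]
      | succ m =>
        rw [PowerSeries.coeff_succ_X_mul, PowerSeries.coeff_derivative, ih]
        push_cast
        ring_nf
    rw [hX, ih] at hc
    have hne : ((n:ℚ)+1) ≠ 0 := by positivity
    have hfne : ((n.factorial : ℚ)) ≠ 0 := by positivity
    have hfac : (((n+1).factorial : ℕ) : ℚ) = ((n:ℚ)+1) * n.factorial := by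
      rw [Nat.factorial_succ]; push_cast; ring
    have hff : ffall x (n+1) = ffall x n * (x - (n:ℚ)) := by
      rw [ffall, ffall, Finset.prod_range_succ]
    have key : PowerSeries.coeff (n+1) (onePow x) * ((n:ℚ)+1)
        = (x - (n:ℚ)) * ffall x n / n.factorial := by
      linear_combination hc
    rw [hff, hfac]
    field_simp at key ⊢
    linear_combination key

lemma ffall_zero_of_lt {x : ℚ} {n : ℕ} (hx : ∃ i : ℕ, i < n ∧ x = i) : ffall x n = 0 := by
  obtain ⟨i, hi, rfl⟩ := hx
  exact Finset.prod_eq_zero (Finset.mem_range.2 hi) (by simp)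

lemma onePow_zero : onePow 0 = 1 := by
  ext n
  rw [coeff_onePow, PowerSeries.coeff_one]
  cases n with
  | zero => simp [ffall]
  | succ m =>
    rw [ffall_zero_of_lt ⟨0, by omega, by simp⟩]
    simp

lemma onePow_one : onePow 1 = 1 + PowerSeries.X := by
  ext n
  rw [coeff_onePow, map_add, PowerSeries.coeff_one, PowerSeries.coeff_X]
  match n with
  | 0 => simp [ffall]
  | 1 => simp [ffall]
  | (m+2) =>
    rw [ffall_zero_of_lt ⟨1, by omega, by simp⟩]
    simp

lemma onePow_sub_one_ne {c : ℚ} (hc : c ≠ 0) : onePow c - 1 ≠ 0 := by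
  intro h
  have := congrArg (PowerSeries.coeff 1) h
  rw [map_sub, coeff_onePow, PowerSeries.coeff_one] at this
  simp [ffall] at this
  exact hc this

noncomputable def subLog (F : PowerSeries ℚ) : PowerSeries ℚ :=
  PowerSeries.mk fun n => ∑ k ∈ Finset.range (n + 1),
    PowerSeries.coeff k F * PowerSeries.coeff n (log1p ^ k)

lemma coeff_subLog (F : PowerSeries ℚ) (n : ℕ) :
    PowerSeries.coeff n (subLog F) = ∑ k ∈ Finset.range (n + 1),
      PowerSeries.coeff k F * PowerSeries.coeff n (log1p ^ k) := by
  simp [subLog]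

lemma coeff_subLog_ext (F : PowerSeries ℚ) {n N : ℕ} (h : n < N) :
    PowerSeries.coeff n (subLog F) = ∑ k ∈ Finset.range N,
      PowerSeries.coeff k F * PowerSeries.coeff n (log1p ^ k) := by
  rw [coeff_subLog]
  apply Finset.sum_subset (Finset.range_subset_range.2 (by omega))
  intro k _ hk
  rw [coeff_log1p_pow_eq_zero (by simp at hk ⊢; omega), mul_zero]

lemma subLog_mul (F G : PowerSeries ℚ) : subLog (F * G) = subLog F * subLog G := by
  ext n
  set f := fun k => PowerSeries.coeff k F
  set g := fun k => PowerSeries.coeff k G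
  set sq := Finset.range (n+1) ×ˢ Finset.range (n+1) with hsq
  have hmid : PowerSeries.coeff n (subLog F * subLog G)
      = ∑ p ∈ sq, f p.1 * g p.2 * PowerSeries.coeff n (log1p ^ (p.1 + p.2)) := by
    rw [PowerSeries.coeff_mul]
    have h1 : ∀ q ∈ Finset.HasAntidiagonal.antidiagonal n,
        PowerSeries.coeff q.1 (subLog F) * PowerSeries.coeff q.2 (subLog G)
        = ∑ p ∈ sq, f p.1 * g p.2 *
            (PowerSeries.coeff q.1 (log1p ^ p.1) * PowerSeries.coeff q.2 (log1p ^ p.2)) := by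
      intro q hq
      have hq1 : q.1 ≤ n := Finset.HasAntidiagonal.antidiagonal.fst_le hq
      have hq2 : q.2 ≤ n := Finset.HasAntidiagonal.antidiagonal.snd_le hq
      rw [coeff_subLog_ext F (show q.1 < n+1 by omega),
          coeff_subLog_ext G (show q.2 < n+1 by omega), Finset.sum_mul_sum,
          ← Finset.sum_product']
      apply Finset.sum_congr rfl
      intro p _
      ring
    rw [Finset.sum_congr rfl h1, Finset.sum_comm]
    apply Finset.sum_congr rfl
    intro p _
    rw [← Finset.mul_sum, pow_add, PowerSeries.coeff_mul]
  have hleft : PowerSeries.coeff n (subLog (F * G))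
      = ∑ p ∈ sq, f p.1 * g p.2 * PowerSeries.coeff n (log1p ^ (p.1 + p.2)) := by
    rw [coeff_subLog]
    have h2 : ∀ K ∈ Finset.range (n+1),
        PowerSeries.coeff K (F * G) * PowerSeries.coeff n (log1p ^ K)
        = ∑ p ∈ Finset.HasAntidiagonal.antidiagonal K, f p.1 * g p.2 *
            PowerSeries.coeff n (log1p ^ (p.1 + p.2)) := by
      intro K _
      rw [PowerSeries.coeff_mul, Finset.sum_mul]
      apply Finset.sum_congr rfl
      intro p hp
      rw [Finset.HasAntidiagonal.mem_antidiagonal] at hp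
      rw [hp]
    rw [Finset.sum_congr rfl h2, ← Finset.sum_biUnion]
    · have hset : (Finset.range (n+1)).biUnion Finset.HasAntidiagonal.antidiagonal
          = sq.filter (fun p => p.1 + p.2 ≤ n) := by
        ext p
        simp only [Finset.mem_biUnion, Finset.mem_range, Finset.HasAntidiagonal.mem_antidiagonal,
          Finset.mem_filter, hsq, Finset.mem_product]
        constructor
        · rintro ⟨K, hK, hpk⟩; omega
        · intro h; exact ⟨p.1 + p.2, by omega, rfl⟩
      rw [hset]
      apply Finset.sum_subset (Finset.filter_subset _ _)
      intro p _ hp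
      rw [Finset.mem_filter] at hp
      have : n < p.1 + p.2 := by
        by_contra hcon
        exact hp ⟨by assumption, by omega⟩
      rw [coeff_log1p_pow_eq_zero this, mul_zero]
    · intro K1 _ K2 _ hne
      simp only [Function.onFun, Finset.disjoint_left]
      intro p h1 h2
      rw [Finset.HasAntidiagonal.mem_antidiagonal] at h1 h2
      exact hne (h1 ▸ h2)
  rw [hleft, hmid]

lemma subLog_one : subLog 1 = 1 := by
  ext n
  rw [coeff_subLog]
  simp only [PowerSeries.coeff_one]
  rw [Finset.sum_eq_single 0]
  · simp
  · intro k _ hk; simp [hk]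
  · simp

lemma subLog_C (c : ℚ) : subLog (PowerSeries.C c) = PowerSeries.C c := by
  ext n
  rw [coeff_subLog]
  simp only [PowerSeries.coeff_C]
  rw [Finset.sum_eq_single 0]
  · simp [PowerSeries.coeff_C]
  · intro k _ hk; simp [hk]
  · simp

lemma subLog_sub (F G : PowerSeries ℚ) : subLog (F - G) = subLog F - subLog G := by
  ext n
  rw [map_sub, coeff_subLog, coeff_subLog, coeff_subLog, ← Finset.sum_sub_distrib]
  apply Finset.sum_congr rfl
  intro k _
  rw [map_sub, sub_mul]

lemma subLog_pow (F : PowerSeries ℚ) (k : ℕ) : subLog (F ^ k) = subLog F ^ k := by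
  induction k with
  | zero => simpa using subLog_one
  | succ m ih => rw [pow_succ, pow_succ, subLog_mul, ih]

lemma subLog_expAt (c : ℚ) : subLog (expAt c) = onePow c := by
  ext n
  rw [coeff_subLog, onePow, coeff_expPS]
  apply Finset.sum_congr rfl
  intro k _
  rw [mul_pow, ← map_pow, PowerSeries.coeff_C_mul]
  simp only [expAt, PowerSeries.coeff_mk]
  ring

lemma coeff_onePow_sum (x : ℚ) (j : ℕ) :
    ffall x j / j.factorial
      = ∑ k ∈ Finset.range (j+1), (PowerSeries.coeff j (log1p ^ k) / k.factorial) * x ^ k := by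
  rw [← coeff_onePow, onePow, coeff_expPS]
  apply Finset.sum_congr rfl
  intro k _
  rw [mul_pow, ← map_pow, PowerSeries.coeff_C_mul]
  ring

lemma stirling (S1 : ℕ → ℕ → ℚ)
    (hS1 : ∀ (l : ℕ) (x : ℚ), ffall x l = ∑ j ∈ Finset.range (l + 1), S1 l j * x ^ j)
    {j m : ℕ} (hm : m ≤ j) :
    PowerSeries.coeff j (log1p ^ m) = m.factorial * S1 j m / j.factorial := by
  have hpq : (∑ k ∈ Finset.range (j+1),
        Polynomial.C (PowerSeries.coeff j (log1p ^ k) / k.factorial) * Polynomial.X ^ k)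
      = ∑ k ∈ Finset.range (j+1), Polynomial.C (S1 j k / j.factorial) * Polynomial.X ^ k := by
    apply Polynomial.funext
    intro x
    simp only [Polynomial.eval_finset_sum, Polynomial.eval_mul, Polynomial.eval_C,
      Polynomial.eval_pow, Polynomial.eval_X]
    rw [← coeff_onePow_sum x j]
    rw [show ffall x j / (j.factorial : ℚ)
        = (∑ i ∈ Finset.range (j+1), S1 j i * x ^ i) / j.factorial by rw [← hS1]]
    rw [Finset.sum_div]
    apply Finset.sum_congr rfl
    intro k _
    ring
  have h2 := congrArg (fun p => Polynomial.coeff p m) hpq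
  simp only [Polynomial.finset_sum_coeff, Polynomial.coeff_C_mul, Polynomial.coeff_X_pow] at h2
  rw [Finset.sum_eq_single m (fun k _ hk => by simp [Ne.symm hk])
      (fun h => absurd (Finset.mem_range.2 (by omega)) h),
    Finset.sum_eq_single m (fun k _ hk => by simp [Ne.symm hk])
      (fun h => absurd (Finset.mem_range.2 (by omega)) h)] at h2
  simp only [if_pos rfl, mul_one] at h2
  have hmf : ((m.factorial : ℚ)) ≠ 0 := by positivity
  field_simp at h2 ⊢
  linear_combination h2

lemma ffall_nat (n i : ℕ) : ffall (n : ℚ) i = (n.descFactorial i : ℚ) := by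
  induction i with
  | zero => simp [ffall]
  | succ i ih =>
    rw [show ffall (n:ℚ) (i+1) = ffall (n:ℚ) i * ((n:ℚ) - i) by
        rw [ffall, ffall, Finset.prod_range_succ], Nat.descFactorial_succ, ih]
    by_cases hi : i ≤ n
    · push_cast [Nat.cast_sub hi]
      ring
    · rw [Nat.descFactorial_eq_zero_iff_lt.2 (by omega), Nat.sub_eq_zero_of_le (by omega)]
      push_cast
      ring

lemma term_fact {n i l : ℕ} (hi : i ≤ n) (hl : l ≤ n - i) :
    ffall (n : ℚ) i * ((n - i).choose l : ℚ) / n.factorial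
      = 1 / (l.factorial * (n - i - l).factorial) := by
  rw [ffall_nat, Nat.descFactorial_eq_factorial_mul_choose, Nat.cast_mul,
    Nat.cast_choose ℚ hi, Nat.cast_choose ℚ hl]
  have h1 : ((n.factorial : ℚ)) ≠ 0 := by positivity
  have h2 : ((i.factorial : ℚ)) ≠ 0 := by positivity
  have h3 : (((n-i).factorial : ℚ)) ≠ 0 := by positivity
  have h4 : ((l.factorial : ℚ)) ≠ 0 := by positivity
  have h5 : (((n-i-l).factorial : ℚ)) ≠ 0 := by positivity
  field_simp

lemma sum_indicator_range {K N : ℕ} (hK : K ≤ N) (f : ℕ → ℚ) :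
    ∑ j ∈ Finset.range (K+1), f j = ∑ j ∈ Finset.range (N+1), if j ≤ K then f j else 0 := by
  rw [show ∑ j ∈ Finset.range (K+1), f j
      = ∑ j ∈ Finset.range (K+1), if j ≤ K then f j else 0 from
    Finset.sum_congr rfl fun j hj => by rw [if_pos (by simp at hj; omega)]]
  apply Finset.sum_subset (Finset.range_subset_range.2 (by omega))
  intro j _ hj
  rw [if_neg (by simp at hj; omega)]

lemma double_indicator {N b : ℕ} (hb : b ≤ N) (W : ℕ → ℕ → ℚ) :
    ∑ l ∈ Finset.range (N+1), ∑ m ∈ Finset.range (N+1), (if l + m ≤ b then W l m else 0)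
      = ∑ l ∈ Finset.range (b+1), ∑ m ∈ Finset.range (b-l+1), W l m := by
  rw [sum_indicator_range hb (fun l => ∑ m ∈ Finset.range (b-l+1), W l m)]
  apply Finset.sum_congr rfl
  intro l _
  by_cases hl : l ≤ b
  · rw [if_pos hl, sum_indicator_range (show b - l ≤ N by omega) (fun m => W l m)]
    apply Finset.sum_congr rfl
    intro m _
    by_cases hm : l + m ≤ b
    · rw [if_pos hm, if_pos (by omega)]
    · rw [if_neg hm, if_neg (by omega)]
  · rw [if_neg hl]
    exact Finset.sum_eq_zero fun m _ => if_neg (by omega)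


lemma per_term {s i l m n : ℕ} {lam : ℚ} (hlam : (1:ℚ) - lam ≠ 0) (hil : i + l + m ≤ n)
    (c d h' : ℚ) :
    ((1:ℚ) - lam)^s * ((s.choose i : ℚ) * (((n-i).choose l : ℕ) : ℚ) * ffall (n:ℚ) i *
        (1-lam) ^ (-(i:ℤ)) * c * d * h')
    = (s.choose i : ℚ) * (1-lam)^(s-i) * (d / l.factorial) *
        (h' * c / (n-i-l).factorial) * n.factorial := by
  by_cases his : i ≤ s
  · have h6 := term_fact (n := n) (i := i) (l := l) (by omega) (by omega)
    have hz : ((1:ℚ)-lam) ^ (-(i:ℤ)) = (((1:ℚ)-lam) ^ i)⁻¹ := by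
      rw [zpow_neg, zpow_natCast]
    have hps : ((1:ℚ)-lam)^(s-i) * (1-lam)^i = (1-lam)^s := by
      rw [← pow_add]; congr 1; omega
    have hfl : ((l.factorial : ℚ)) ≠ 0 := by positivity
    have hfm : (((n-i-l).factorial : ℚ)) ≠ 0 := by positivity
    have hfn : ((n.factorial : ℚ)) ≠ 0 := by positivity
    have hpi : ((1:ℚ)-lam)^i ≠ 0 := pow_ne_zero _ hlam
    have h7 : ffall (n:ℚ) i * (((n-i).choose l : ℕ) : ℚ) * l.factorial * (n-i-l).factorial
        = n.factorial := by
      field_simp at h6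
      linear_combination h6
    rw [hz, ← hps]
    field_simp
    linear_combination (s.choose i : ℚ) * c * d * h' * h7
  · rw [Nat.choose_eq_zero_of_lt (by omega)]
    push_cast
    ring

theorem stmt15 (r : ℕ) (a : Fin r → ℚ) (ha : ∀ j, a j ≠ 0) (s : ℕ) (lam : ℚ) (hlam : lam ≠ 1) (D : ℕ → ℚ → ℚ)
    (hD : ∀ x : ℚ, (∏ j, (onePow (a j) - 1)) * egf (fun n => D n x) = log1p ^ r * onePow x)
    (S1 : ℕ → ℕ → ℚ) (hS1 : ∀ (l : ℕ) (x : ℚ), ffall x l = ∑ j ∈ Finset.range (l + 1), S1 l j * x ^ j)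
    (H : ℕ → ℚ → ℚ)
    (hH : ∀ x : ℚ, (expAt 1 - PowerSeries.C lam) ^ s * egf (fun n => H n x) =
      (PowerSeries.C (1 - lam)) ^ s * expAt x)
    (n : ℕ) (x : ℚ) :
    D n x = ∑ m ∈ Finset.range (n + 1),
      (∑ i ∈ Finset.range (n - m + 1), ∑ l ∈ Finset.range (n - m - i + 1),
        (s.choose i : ℚ) * ((n - i).choose l : ℚ) * ffall (n : ℚ) i *
          (1 - lam) ^ (-(i : ℤ)) * S1 (n - i - l) m * D l 0) * H m x := by
  classical
  have hlam' : (1 : ℚ) - lam ≠ 0 := sub_ne_zero.2 (Ne.symm hlam)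
  have hpow : ((1:ℚ) - lam) ^ s ≠ 0 := pow_ne_zero _ hlam'
  have hP : (∏ j, (onePow (a j) - 1)) ≠ 0 :=
    Finset.prod_ne_zero_iff.2 fun j _ => onePow_sub_one_ne (ha j)
  have h1 : egf (fun n => D n x) = egf (fun n => D n 0) * onePow x := by
    apply mul_left_cancel₀ hP
    have h0 := hD 0
    rw [onePow_zero, mul_one] at h0
    rw [hD x, ← mul_assoc, h0]
  set K := subLog (egf fun n => H n x) with hK
  have h2 : ((1 + PowerSeries.X) - PowerSeries.C lam) ^ s * K
      = (PowerSeries.C (1 - lam)) ^ s * onePow x := by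
    have hh := congrArg subLog (hH x)
    simp only [subLog_mul, subLog_pow, subLog_sub, subLog_C, subLog_expAt, onePow_one] at hh
    exact hh
  have h3 : PowerSeries.C ((1-lam)^s) * egf (fun n => D n x)
      = egf (fun n => D n 0) * (((1 + PowerSeries.X) - PowerSeries.C lam) ^ s * K) := by
    rw [h1, h2, ← map_pow]
    ring
  rw [show ((1:PowerSeries ℚ) + PowerSeries.X) - PowerSeries.C lam
      = PowerSeries.X + PowerSeries.C (1 - lam) by rw [map_sub, map_one]; ring,
    add_pow] at h3
  have h4 : PowerSeries.C ((1-lam)^s) * egf (fun n => D n x)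
      = ∑ i ∈ Finset.range (s+1), PowerSeries.C ((1-lam)^(s-i) * (s.choose i : ℚ)) *
          (PowerSeries.X ^ i * (egf (fun n => D n 0) * K)) := by
    rw [h3, Finset.sum_mul, Finset.mul_sum]
    apply Finset.sum_congr rfl
    intro i _
    rw [← map_natCast (PowerSeries.C (R := ℚ)) (s.choose i), ← map_pow, map_mul]
    ring
  have hc := congrArg (PowerSeries.coeff n) h4
  rw [PowerSeries.coeff_C_mul, map_sum] at hc
  simp only [PowerSeries.coeff_C_mul, PowerSeries.coeff_X_pow_mul'] at hc
  have hA : ∀ j : ℕ, PowerSeries.coeff j (egf (fun n => D n 0) * K)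
      = ∑ l ∈ Finset.range (j+1), (D l 0 / l.factorial) *
          (∑ m ∈ Finset.range (j-l+1), H m x * S1 (j-l) m / (j-l).factorial) := by
    intro j
    rw [PowerSeries.coeff_mul, Finset.Nat.sum_antidiagonal_eq_sum_range_succ_mk]
    apply Finset.sum_congr rfl
    intro l hl
    have h5 : PowerSeries.coeff l (egf fun n => D n 0) = D l 0 / l.factorial := by
      simp [egf]
    rw [h5, hK, coeff_subLog]
    congr 1
    apply Finset.sum_congr rfl
    intro m hm
    rw [stirling S1 hS1 (by simp at hm; omega)]
    have h5' : PowerSeries.coeff m (egf fun n => H n x) = H m x / m.factorial := by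
      simp [egf]
    rw [h5']
    have hfm : ((m.factorial : ℚ)) ≠ 0 := by positivity
    field_simp
  have hDn : PowerSeries.coeff n (egf fun n => D n x) = D n x / n.factorial := by
    simp [egf]
  rw [hDn] at hc
  simp only [hA] at hc
  -- abbreviations
  set W : ℕ → ℕ → ℕ → ℚ := fun i l m => (s.choose i : ℚ) * (1-lam)^(s-i) *
    (D l 0 / l.factorial) * (H m x * S1 (n-i-l) m / (n-i-l).factorial) * n.factorial with hW
  set F : ℚ := ∑ i ∈ Finset.range (n+1), ∑ l ∈ Finset.range (n+1), ∑ m ∈ Finset.range (n+1),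
    (if i + l + m ≤ n then W i l m else 0) with hF
  set BS : ℚ := ∑ i ∈ Finset.range (s+1),
      (1-lam)^(s-i) * (s.choose i : ℚ) *
      (if i ≤ n then ∑ l ∈ Finset.range (n-i+1), (D l 0 / l.factorial) *
        (∑ m ∈ Finset.range (n-i-l+1), H m x * S1 (n-i-l) m / (n-i-l).factorial) else 0) with hBS
  set g : ℕ → ℚ := fun i => (1-lam)^(s-i) * (s.choose i : ℚ) *
    ((if i ≤ n then ∑ l ∈ Finset.range (n-i+1), (D l 0 / l.factorial) *
        (∑ m ∈ Finset.range (n-i-l+1), H m x * S1 (n-i-l) m / (n-i-l).factorial) else 0))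
      * n.factorial with hg
  have hClaimA : (n.factorial : ℚ) * BS = F := by
    have hg0s : ∀ i, s < i → g i = 0 := by
      intro i hi
      simp [hg, Nat.choose_eq_zero_of_lt hi]
    have hg0n : ∀ i, n < i → g i = 0 := by
      intro i hi
      simp [hg, if_neg (by omega : ¬ i ≤ n)]
    have hsum1 : (n.factorial : ℚ) * BS = ∑ i ∈ Finset.range (s+1), g i := by
      rw [hBS, Finset.mul_sum]
      exact Finset.sum_congr rfl fun i _ => by simp only [hg]; ring
    rw [hsum1]
    have hext : ∑ i ∈ Finset.range (s+1), g i = ∑ i ∈ Finset.range (n+1), g i := by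
      have e1 : ∑ i ∈ Finset.range (s+1), g i = ∑ i ∈ Finset.range (s+n+1), g i := by
        apply Finset.sum_subset (Finset.range_subset_range.2 (by omega))
        intro i _ hi
        exact hg0s i (by simp at hi; omega)
      have e2 : ∑ i ∈ Finset.range (n+1), g i = ∑ i ∈ Finset.range (s+n+1), g i := by
        apply Finset.sum_subset (Finset.range_subset_range.2 (by omega))
        intro i _ hi
        exact hg0n i (by simp at hi; omega)
      rw [e1, ← e2]
    rw [hext, hF]
    apply Finset.sum_congr rfl
    intro i hi
    have hin : i ≤ n := by simp at hi; omega
    simp only [hg]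
    rw [if_pos hin]
    symm
    have hcond : ∀ l m : ℕ, (if i + l + m ≤ n then W i l m else 0)
        = (if l + m ≤ n - i then W i l m else 0) := by
      intro l m
      by_cases hc' : i + l + m ≤ n
      · rw [if_pos hc', if_pos (by omega)]
      · rw [if_neg hc', if_neg (by omega)]
    calc (∑ l ∈ Finset.range (n+1), ∑ m ∈ Finset.range (n+1), if i + l + m ≤ n then W i l m else 0)
        = ∑ l ∈ Finset.range (n+1), ∑ m ∈ Finset.range (n+1), if l + m ≤ n - i then W i l m else 0 :=
          Finset.sum_congr rfl fun l _ => Finset.sum_congr rfl fun m _ => hcond l m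
      _ = ∑ l ∈ Finset.range (n-i+1), ∑ m ∈ Finset.range (n-i-l+1), W i l m :=
          double_indicator (by omega) _
      _ = (1-lam)^(s-i) * (s.choose i : ℚ) * (∑ l ∈ Finset.range (n-i+1), (D l 0 / l.factorial) *
            (∑ m ∈ Finset.range (n-i-l+1), H m x * S1 (n-i-l) m / (n-i-l).factorial)) * n.factorial := by
          simp only [Finset.mul_sum, Finset.sum_mul]
          apply Finset.sum_congr rfl
          intro l _
          apply Finset.sum_congr rfl
          intro m _
          simp only [hW]
          ring
  have hClaimB : ((1:ℚ)-lam)^s * (∑ m ∈ Finset.range (n + 1),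
      (∑ i ∈ Finset.range (n - m + 1), ∑ l ∈ Finset.range (n - m - i + 1),
        (s.choose i : ℚ) * ((n - i).choose l : ℚ) * ffall (n : ℚ) i *
          (1 - lam) ^ (-(i : ℤ)) * S1 (n - i - l) m * D l 0) * H m x) = F := by
    have hFm : F = ∑ m ∈ Finset.range (n+1), ∑ i ∈ Finset.range (n+1),
        ∑ l ∈ Finset.range (n+1), (if i + l + m ≤ n then W i l m else 0) := by
      rw [hF]
      rw [show (∑ i ∈ Finset.range (n+1), ∑ l ∈ Finset.range (n+1), ∑ m ∈ Finset.range (n+1),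
            (if i + l + m ≤ n then W i l m else 0))
          = ∑ i ∈ Finset.range (n+1), ∑ m ∈ Finset.range (n+1), ∑ l ∈ Finset.range (n+1),
            (if i + l + m ≤ n then W i l m else 0) from
        Finset.sum_congr rfl fun i _ => Finset.sum_comm]
      exact Finset.sum_comm
    rw [hFm, Finset.mul_sum]
    apply Finset.sum_congr rfl
    intro m hm
    have hmn : m ≤ n := by simp at hm; omega
    have hcond : ∀ i l : ℕ, (if i + l + m ≤ n then W i l m else 0)
        = (if i + l ≤ n - m then W i l m else 0) := by
      intro i l
      by_cases hc' : i + l + m ≤ n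
      · rw [if_pos hc', if_pos (by omega)]
      · rw [if_neg hc', if_neg (by omega)]
    calc ((1:ℚ)-lam)^s * ((∑ i ∈ Finset.range (n - m + 1), ∑ l ∈ Finset.range (n - m - i + 1),
          (s.choose i : ℚ) * ((n - i).choose l : ℚ) * ffall (n : ℚ) i *
            (1 - lam) ^ (-(i : ℤ)) * S1 (n - i - l) m * D l 0) * H m x)
        = ∑ i ∈ Finset.range (n-m+1), ∑ l ∈ Finset.range (n-m-i+1), W i l m := by
          simp only [Finset.mul_sum, Finset.sum_mul]
          apply Finset.sum_congr rfl
          intro i hi'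
          apply Finset.sum_congr rfl
          intro l hl'
          have hi2 : i ≤ n - m := by simp at hi'; omega
          have hl2 : l ≤ n - m - i := by simp at hl'; omega
          have hpt := per_term (s := s) (i := i) (l := l) (m := m) (n := n) hlam'
            (by omega) (S1 (n-i-l) m) (D l 0) (H m x)
          simp only [hW]
          linear_combination hpt
      _ = ∑ i ∈ Finset.range (n+1), ∑ l ∈ Finset.range (n+1),
            (if i + l ≤ n - m then W i l m else 0) := (double_indicator (by omega) _).symm
      _ = ∑ i ∈ Finset.range (n+1), ∑ l ∈ Finset.range (n+1),
            (if i + l + m ≤ n then W i l m else 0) :=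
          Finset.sum_congr rfl fun i _ => Finset.sum_congr rfl fun l _ => (hcond i l).symm
  -- conclude
  apply mul_left_cancel₀ hpow
  have hfn : ((n.factorial : ℚ)) ≠ 0 := by positivity
  calc ((1:ℚ)-lam)^s * D n x
      = (n.factorial : ℚ) * ((1-lam)^s * (D n x / n.factorial)) := by
        field_simp
      _ = (n.factorial : ℚ) * BS := by rw [hc]
      _ = F := hClaimA
      _ = ((1:ℚ)-lam)^s * (∑ m ∈ Finset.range (n + 1),
          (∑ i ∈ Finset.range (n - m + 1), ∑ l ∈ Finset.range (n - m - i + 1),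
            (s.choose i : ℚ) * ((n - i).choose l : ℚ) * ffall (n : ℚ) i *
              (1 - lam) ^ (-(i : ℤ)) * S1 (n - i - l) m * D l 0) * H m x) := hClaimB.symm
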